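/- Let βγ > 1, β ≤ γ, λ < λ_c, and consider any finite rooted tree with all fields ≤ λ and no pinned vertices. Then the ratio R_v = p_v/(1−p_v) at the root, computed by the recursion R_v = λ_v·∏ᵢ(βR_{vᵢ}+1)/(R_{vᵢ}+γ) over children vᵢ, satisfies R_v ∈ (0, λ]. -/

import Mathlib

/-- A finite rooted tree in which every vertex carries an external field. -/
inductive FieldTree : Type
  | node : ℝ → List FieldTree → FieldTree

/-- The ratio `R_v = p_v/(1-p_v)` at the root, computed by the tree recursion
`R_v = λ_v · ∏ᵢ (β R_{vᵢ} + 1)/(R_{vᵢ} + γ)` over the children. -/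
noncomputable def FieldTree.ratio (β γ : ℝ) : FieldTree → ℝ
  | .node lv cs =>
      lv * (cs.attach.map fun c => (β * c.1.ratio β γ + 1) / (c.1.ratio β γ + γ)).prod
  decreasing_by
    have := List.sizeOf_lt_of_mem c.2
    simp at *
    omega

/-- All fields in the tree lie in `(0, lam]`. -/
def FieldTree.fieldsLE (lam : ℝ) : FieldTree → Prop
  | .node lv cs => (0 < lv ∧ lv ≤ lam) ∧ ∀ c ∈ cs, c.fieldsLE lam

lemma key_ineq (s u : ℝ) (hs : 1 < s) (hu1 : 1 ≤ u) (hus : u < s) :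
    2*s/(s-1) * Real.log u ≤ Real.log u + Real.log (s*u-1) - Real.log (s-u) := by
  set F : ℝ → ℝ := fun x =>
    Real.log x + Real.log (s*x-1) - Real.log (s-x) - 2*s/(s-1) * Real.log x with hF
  have hderiv : ∀ x ∈ Set.Icc (1:ℝ) u,
      HasDerivAt F (x⁻¹ + (s*x-1)⁻¹ * s - (s-x)⁻¹ * (-1) - 2*s/(s-1) * x⁻¹) x := by
    intro x hx
    have hx0 : 0 < x := lt_of_lt_of_le one_pos hx.1
    have h1 : 0 < s*x - 1 := by nlinarith [hx.1]
    have h2 : 0 < s - x := by have := hx.2; linarith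
    have d1 : HasDerivAt Real.log x⁻¹ x := Real.hasDerivAt_log hx0.ne'
    have d2 : HasDerivAt (fun y => Real.log (s*y-1)) ((s*x-1)⁻¹ * s) x := by
      have h : HasDerivAt (fun y : ℝ => s*y-1) s x := by
        simpa using ((hasDerivAt_id x).const_mul s).sub_const 1
      exact (Real.hasDerivAt_log h1.ne').comp x h
    have d3 : HasDerivAt (fun y => Real.log (s-y)) ((s-x)⁻¹ * (-1)) x := by
      have h : HasDerivAt (fun y : ℝ => s - y) (-1) x := by
        simpa using (hasDerivAt_id x).const_sub s
      exact (Real.hasDerivAt_log h2.ne').comp x h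
    exact ((d1.add d2).sub d3).sub (d1.const_mul (2*s/(s-1)))
  have hnonneg : ∀ x ∈ Set.Icc (1:ℝ) u,
      0 ≤ x⁻¹ + (s*x-1)⁻¹ * s - (s-x)⁻¹ * (-1) - 2*s/(s-1) * x⁻¹ := by
    intro x hx
    have hx0 : 0 < x := lt_of_lt_of_le one_pos hx.1
    have h1 : 0 < s*x - 1 := by nlinarith [hx.1]
    have h2 : 0 < s - x := by have := hx.2; linarith
    have hs1 : 0 < s - 1 := by linarith
    have hDpos : 0 < (s-1)*x*(s*x-1)*(s-x) :=
      mul_pos (mul_pos (mul_pos hs1 hx0) h1) h2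
    have heq : x⁻¹ + (s*x-1)⁻¹ * s - (s-x)⁻¹ * (-1) - 2*s/(s-1) * x⁻¹
        = (s*(s+1)*(x-1)^2) / ((s-1)*x*(s*x-1)*(s-x)) := by
      have : -1 + x*s ≠ 0 := by linarith
      have : x*s - 1 ≠ 0 := by linarith
      field_simp
      ring
    rw [heq]
    exact div_nonneg (mul_nonneg (mul_nonneg (by linarith) (by linarith)) (sq_nonneg _))
      hDpos.le
  have mono : MonotoneOn F (Set.Icc 1 u) := by
    apply monotoneOn_of_deriv_nonneg (convex_Icc 1 u)
    · exact fun x hx => (hderiv x hx).continuousAt.continuousWithinAt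
    · intro x hx
      exact ((hderiv x (interior_subset hx)).differentiableAt).differentiableWithinAt
    · intro x hx
      rw [(hderiv x (interior_subset hx)).deriv]
      exact hnonneg x (interior_subset hx)
  have h01 : F 1 = 0 := by
    simp [hF]
  have hFu : F 1 ≤ F u := mono (Set.left_mem_Icc.2 hu1) (Set.right_mem_Icc.2 hu1) hu1
  rw [h01] at hFu
  simp only [hF] at hFu
  linarith

lemma thresh (β γ : ℝ) (hβ1 : 1 < β) (hle : β ≤ γ) :
    (γ/β) ^ (Real.sqrt (β*γ) / (Real.sqrt (β*γ) - 1)) ≤ (γ-1)/(β-1) := by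
  have hβ0 : 0 < β := by linarith
  have hγ1 : 1 < γ := by linarith
  have hγ0 : 0 < γ := by linarith
  set s := Real.sqrt (β*γ) with hsdef
  set u := Real.sqrt (γ/β) with hudef
  have hu0 : 0 < u := Real.sqrt_pos.2 (div_pos hγ0 hβ0)
  have hs0 : 0 < s := Real.sqrt_pos.2 (by positivity)
  have hs2 : s^2 = β*γ := Real.sq_sqrt (by positivity)
  have hu2 : u^2 = γ/β := Real.sq_sqrt (by positivity)
  have hsu : s * u = γ := by
    rw [hsdef, hudef, ← Real.sqrt_mul (by positivity : (0:ℝ) ≤ β*γ)]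
    rw [show β*γ*(γ/β) = γ^2 by field_simp]
    exact Real.sqrt_sq hγ0.le
  have hbu : β * u = s := by
    have h3 : s * (β * u) = s * s := by
      linear_combination β * hsu - hs2
    exact mul_left_cancel₀ hs0.ne' h3
  have hu1 : 1 ≤ u := by
    nlinarith [hu2, (one_le_div hβ0).2 hle]
  have hs1 : 1 < s := by nlinarith
  have hus : u < s := by nlinarith
  have hsu1 : 0 < s*u - 1 := by rw [hsu]; linarith
  have hsmu : 0 < s - u := by linarith
  have key := key_ineq s u hs1 hu1 hus
  have hR : (γ-1)/(β-1) = Real.exp (Real.log u + Real.log (s*u-1) - Real.log (s-u)) := by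
    rw [Real.exp_sub, Real.exp_add, Real.exp_log hu0, Real.exp_log hsu1, Real.exp_log hsmu]
    rw [← hsu]
    rw [div_eq_div_iff (by linarith) hsmu.ne']
    linear_combination (-(s*u - 1)) * hbu
  rw [Real.rpow_def_of_pos (div_pos hγ0 hβ0), hR]
  apply Real.exp_le_exp.2
  calc Real.log (γ/β) * (s/(s-1)) = 2*s/(s-1) * Real.log u := by
        rw [← hu2, Real.log_pow]; push_cast; ring
    _ ≤ _ := key

lemma prod_mem_unit (l : List ℝ) (h : ∀ x ∈ l, 0 < x ∧ x ≤ 1) :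
    0 < l.prod ∧ l.prod ≤ 1 := by
  induction l with
  | nil => simp
  | cons a t ih =>
    have ha := h a (by simp)
    have ht := ih (fun x hx => h x (by simp [hx]))
    simp only [List.prod_cons]
    constructor
    · exact mul_pos ha.1 ht.1
    · nlinarith [ha.1, ha.2, ht.1, ht.2]

lemma aux_tree (β γ lam : ℝ)
    (hfac : ∀ x : ℝ, 0 < x → x ≤ lam → (β * x + 1) / (x + γ) ≤ 1)
    (hfacpos : ∀ x : ℝ, 0 < x → x ≤ lam → 0 < (β * x + 1) / (x + γ)) :
    ∀ n : ℕ, ∀ T : FieldTree, sizeOf T ≤ n → T.fieldsLE lam →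
      0 < T.ratio β γ ∧ T.ratio β γ ≤ lam := by
  intro n
  induction n with
  | zero =>
    intro T h
    obtain ⟨lv, cs⟩ := T
    simp at h
  | succ n ih =>
    rintro ⟨lv, cs⟩ h hf
    rw [FieldTree.fieldsLE] at hf
    obtain ⟨⟨hlv0, hlvle⟩, hcs⟩ := hf
    rw [FieldTree.ratio]
    have hprod := prod_mem_unit
      (cs.attach.map fun c => (β * c.1.ratio β γ + 1) / (c.1.ratio β γ + γ)) ?_
    · refine ⟨mul_pos hlv0 hprod.1, ?_⟩
      calc lv * _ ≤ lv * 1 := by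
            exact mul_le_mul_of_nonneg_left hprod.2 hlv0.le
        _ ≤ lam := by rw [mul_one]; exact hlvle
    · intro x hx
      simp only [List.mem_map, List.mem_attach, true_and] at hx
      obtain ⟨c, rfl⟩ := hx
      have hsz : sizeOf c.1 ≤ n := by
        have h2 := List.sizeOf_lt_of_mem c.2
        simp at h h2
        omega
      have hc := ih c.1 hsz (hcs c.1 c.2)
      exact ⟨hfacpos _ hc.1 hc.2, hfac _ hc.1 hc.2⟩

theorem stmt_17 (β γ lam : ℝ) (hβ : 0 < β) (hγ : 0 < γ) (h1 : 1 < β * γ) (hle : β ≤ γ)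
    (hlam : 0 < lam)
    (hlamc : lam < (γ / β) ^ (Real.sqrt (β * γ) / (Real.sqrt (β * γ) - 1)))
    (T : FieldTree) (hT : T.fieldsLE lam) :
    0 < T.ratio β γ ∧ T.ratio β γ ≤ lam := by
  have hγ1 : 1 < γ := by nlinarith
  have hfacpos : ∀ x : ℝ, 0 < x → x ≤ lam → 0 < (β * x + 1) / (x + γ) := by
    intro x hx _
    exact div_pos (by nlinarith) (by linarith)
  have hfac : ∀ x : ℝ, 0 < x → x ≤ lam → (β * x + 1) / (x + γ) ≤ 1 := by
    intro x hx hxl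
    rw [div_le_one (by linarith)]
    rcases le_or_gt β 1 with hb | hb
    · nlinarith
    · have hth := thresh β γ hb hle
      have hx' : x < (γ - 1) / (β - 1) := lt_of_le_of_lt hxl (lt_of_lt_of_le hlamc hth)
      rw [lt_div_iff₀ (by linarith)] at hx'
      nlinarith
  exact aux_tree β γ lam hfac hfacpos (sizeOf T) T le_rfl hT
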